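/- Let a_0, a_1, a_2 be nonnegative integers and let (r_1, r_2) maximize d(r_1, r_2) = r_1(a_0 + a_1) + r_2(a_1 + a_2) − r_1² − r_2² − r_1 r_2 over the feasible region {(r_1, r_2) ∈ ℤ_{≥0}² : r_1 ≤ a_0, r_2 ≤ a_2, r_1 + r_2 ≤ a_1}. Then the Betti numbers β_0 = a_0 − r_1, β_1 = a_1 − r_1 − r_2, β_2 = a_2 − r_2 satisfy β_0 + β_1 + β_2 = |a_0 − a_1 + a_2|. -/
import Mathlib


/-- The dimension of the variety of length-2 chain complexes with ranks `(r₁, r₂)`. -/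
def d2 (a₀ a₁ a₂ : ℕ) (r : ℤ × ℤ) : ℤ :=
  r.1 * (a₀ + a₁) + r.2 * (a₁ + a₂) - r.1 ^ 2 - r.2 ^ 2 - r.1 * r.2

/-- Feasibility of the rank vector `(r₁, r₂)`. -/
def feas2 (a₀ a₁ a₂ : ℕ) (r : ℤ × ℤ) : Prop :=
  0 ≤ r.1 ∧ 0 ≤ r.2 ∧ r.1 ≤ a₀ ∧ r.2 ≤ a₂ ∧ r.1 + r.2 ≤ a₁

/-- For any maximizer `(r₁, r₂)` of `d2` over the feasible region, the Betti numbers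
`β₀ = a₀ - r₁`, `β₁ = a₁ - r₁ - r₂`, `β₂ = a₂ - r₂` satisfy
`β₀ + β₁ + β₂ = |a₀ - a₁ + a₂|`. -/
theorem stmt6 (a₀ a₁ a₂ : ℕ) :
    ∀ r : ℤ × ℤ, feas2 a₀ a₁ a₂ r →
      (∀ s : ℤ × ℤ, feas2 a₀ a₁ a₂ s → d2 a₀ a₁ a₂ s ≤ d2 a₀ a₁ a₂ r) →
      ((a₀ : ℤ) - r.1) + ((a₁ : ℤ) - r.1 - r.2) + ((a₂ : ℤ) - r.2) =
        |(a₀ : ℤ) - a₁ + a₂| := by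
  intro r hr hmax
  obtain ⟨h1, h2, h3, h4, h5⟩ := hr
  -- key1 : r.1 = a₀ ∨ r.1 + r.2 = a₁
  have key1 : r.1 = (a₀ : ℤ) ∨ r.1 + r.2 = (a₁ : ℤ) := by
    by_contra h
    push_neg at h
    obtain ⟨ha, hb⟩ := h
    have ha' : r.1 + 1 ≤ (a₀ : ℤ) := lt_of_le_of_ne h3 ha
    have hb' : r.1 + 1 + r.2 ≤ (a₁ : ℤ) := by
      have : r.1 + r.2 < (a₁ : ℤ) := lt_of_le_of_ne h5 hb
      linarith
    have := hmax (r.1 + 1, r.2) ⟨by simp only []; linarith, h2, ha', h4, hb'⟩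
    simp only [d2] at this
    nlinarith
  have key2 : r.2 = (a₂ : ℤ) ∨ r.1 + r.2 = (a₁ : ℤ) := by
    by_contra h
    push_neg at h
    obtain ⟨ha, hb⟩ := h
    have ha' : r.2 + 1 ≤ (a₂ : ℤ) := lt_of_le_of_ne h4 ha
    have hb' : r.1 + (r.2 + 1) ≤ (a₁ : ℤ) := by
      have : r.1 + r.2 < (a₁ : ℤ) := lt_of_le_of_ne h5 hb
      linarith
    have := hmax (r.1, r.2 + 1) ⟨h1, by simp only []; linarith, h3, ha', hb'⟩
    simp only [d2] at this
    nlinarith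
  rcases key1 with k1 | k1
  · rcases key2 with k2 | k2
    · rw [abs_of_nonpos (by omega), k1, k2]; ring
    · rw [abs_of_nonneg (by omega)]; omega
  · rw [abs_of_nonneg (by omega)]; omega
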